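/- In any graph H, no leaf and no support vertex of H belongs to a good subgraph of H. -/

import Mathlib

open SimpleGraph

variable {V : Type*}

/-- `D` is a dominating set of `G`. -/
def Dominating (G : SimpleGraph V) (D : Set V) : Prop :=
  ∀ v ∉ D, ∃ u ∈ D, G.Adj v u

/-- `P` is a paired-dominating set of `G`: it is dominating and the induced
subgraph `G[P]` contains a perfect matching (given by an involutive pairing of
the vertices of `P` along edges inside `P`). -/
def PairedDominating (G : SimpleGraph V) (P : Set V) : Prop :=
  Dominating G P ∧ ∃ m : V → V, ∀ v ∈ P, m v ∈ P ∧ G.Adj v (m v) ∧ m (m v) = v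

/-- `(D, P)` is a DP-pair: a partition of the vertex set into a dominating set `D`
and a paired-dominating set `P`. -/
def IsDPPair (G : SimpleGraph V) (D P : Set V) : Prop :=
  Disjoint D P ∧ D ∪ P = Set.univ ∧ Dominating G D ∧ PairedDominating G P

/-- `G` is a DPDP-graph: its vertex set partitions into a dominating set and a
paired-dominating set. -/
def IsDPDP (G : SimpleGraph V) : Prop := ∃ D P, IsDPPair G D P

/-- A minimal DPDP-graph: a DPDP-graph no proper spanning subgraph of which is DPDP. -/
def IsMinimalDPDP (G : SimpleGraph V) : Prop :=
  IsDPDP G ∧ ∀ G' : SimpleGraph V, G' < G → ¬ IsDPDP G'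

/-- A leaf is a vertex of degree 1. -/
def IsLeaf (G : SimpleGraph V) (v : V) : Prop := (G.neighborSet v).ncard = 1

/-- A support vertex is a vertex adjacent to at least one leaf. -/
def IsSupport (G : SimpleGraph V) (v : V) : Prop := ∃ u, G.Adj v u ∧ IsLeaf G u

/-- The list of consecutive arcs of an oriented path given as a list of vertices. -/
def listArcs {V : Type*} (l : List V) : List (V × V) := l.zip l.tail

/-- `Q` is a good subgraph of `H`: `Q` has no isolated vertices and there is a
family of oriented paths `p v` (one starting at each vertex `v` of `Q`), pairwise
arc-disjoint and consistently oriented, using only edges of `H` outside `Q`,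
whose arcs include an orientation of every edge of `H` incident with `Q` but not
in `Q`, such that: every vertex of `Q` has out-degree 1 and in-degree
`d_H(v) − d_Q(v) − 1`; every inner vertex `x` of a path has out-degree 1 and
in-degree `d_H(x) − 1`; and every terminal vertex `x` of a path has in-degree
strictly less than `d_H(x)` (degrees of arcs being taken over the whole family). -/
def IsGoodSubgraph {V : Type*} [Fintype V] (H : SimpleGraph V) (Q : H.Subgraph) : Prop :=
  (∀ v ∈ Q.verts, ∃ u, Q.Adj v u) ∧
  ∃ p : V → List V,
    (∀ v ∈ Q.verts, (p v).head? = some v ∧ (p v).Nodup ∧ 2 ≤ (p v).length) ∧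
    (∀ v ∈ Q.verts, ∀ a ∈ listArcs (p v), H.Adj a.1 a.2 ∧ ¬ Q.Adj a.1 a.2) ∧
    (∀ v ∈ Q.verts, ∀ w ∈ Q.verts, ∀ a ∈ listArcs (p v), ∀ b ∈ listArcs (p w),
      (v ≠ w → a ≠ b) ∧ a ≠ (b.2, b.1)) ∧
    (∀ u w : V, H.Adj u w → u ∈ Q.verts → ¬ Q.Adj u w →
      ∃ v ∈ Q.verts, (u, w) ∈ listArcs (p v) ∨ (w, u) ∈ listArcs (p v)) ∧
    (let A : Set (V × V) := {a | ∃ v ∈ Q.verts, a ∈ listArcs (p v)}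
     let outdeg : V → ℕ := fun x => ({w | (x, w) ∈ A} : Set V).ncard
     let indeg : V → ℕ := fun x => ({w | (w, x) ∈ A} : Set V).ncard
     (∀ v ∈ Q.verts, outdeg v = 1 ∧
        indeg v = (H.neighborSet v).ncard - (Q.neighborSet v).ncard - 1) ∧
     (∀ v ∈ Q.verts, ∀ x ∈ p v, x ≠ v → (p v).getLast? ≠ some x →
        outdeg x = 1 ∧ indeg x = (H.neighborSet x).ncard - 1) ∧
     (∀ v ∈ Q.verts, ∀ x : V, (p v).getLast? = some x →
        indeg x < (H.neighborSet x).ncard))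

/-- No leaf and no support vertex of `H` belongs to a good subgraph of `H`. -/
lemma mem_of_getLast?' {V : Type*} {l : List V} {a : V} (h : l.getLast? = some a) : a ∈ l := by
  induction l with
  | nil => simp at h
  | cons x t ih =>
    cases t with
    | nil => simp_all
    | cons y r =>
      rw [List.getLast?_cons_cons] at h
      exact List.mem_cons_of_mem _ (ih h)

lemma not_getLast_of_arc' {V : Type*} {l : List V} (hn : l.Nodup) {a b : V}
    (h : (a, b) ∈ listArcs l) : l.getLast? ≠ some a := by
  induction l with
  | nil => simp [listArcs] at h
  | cons x t ih =>
    cases t with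
    | nil => simp [listArcs] at h
    | cons y r =>
      rw [show listArcs (x :: y :: r) = (x, y) :: listArcs (y :: r) from rfl] at h
      rw [List.getLast?_cons_cons]
      rcases List.mem_cons.mp h with h1 | h2
      · injection h1 with h1a h1b
        subst h1a
        intro hc
        exact (List.nodup_cons.mp hn).1 (mem_of_getLast?' hc)
      · exact ih (List.nodup_cons.mp hn).2 h2

lemma exists_pred_arc' {V : Type*} {l : List V} {a : V} (ha : a ∈ l.tail) :
    ∃ x, (x, a) ∈ listArcs l := by
  induction l with
  | nil => simp at ha
  | cons x t ih =>
    simp only [List.tail_cons] at ha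
    cases t with
    | nil => simp at ha
    | cons y r =>
      rw [show listArcs (x :: y :: r) = (x, y) :: listArcs (y :: r) from rfl]
      rcases List.mem_cons.mp ha with rfl | ha'
      · exact ⟨x, List.mem_cons_self⟩
      · obtain ⟨z, hz⟩ := ih ha'
        exact ⟨z, List.mem_cons_of_mem _ hz⟩

lemma two_nbrs_not_leaf' {V : Type*} (H : SimpleGraph V) {x a b : V}
    (ha : H.Adj x a) (hb : H.Adj x b) (hab : a ≠ b) : ¬ IsLeaf H x := by
  intro hL
  obtain ⟨c, hc⟩ := Set.ncard_eq_one.mp hL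
  have h1 : a ∈ H.neighborSet x := ha
  have h2 : b ∈ H.neighborSet x := hb
  rw [hc, Set.mem_singleton_iff] at h1 h2
  exact hab (h1.trans h2.symm)

theorem stmt16 {V : Type*} [Fintype V] (H : SimpleGraph V) (Q : H.Subgraph)
    (hQ : IsGoodSubgraph H Q) :
    ∀ v ∈ Q.verts, ¬ IsLeaf H v ∧ ¬ IsSupport H v := by
  obtain ⟨hiso, p, hpath, harc, -, hcover, hdeg1, hdeg2, hdeg3⟩ := hQ
  set A : Set (V × V) := {a | ∃ v ∈ Q.verts, a ∈ listArcs (p v)} with hA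
  -- positivity of indegree
  have hindpos : ∀ x w : V, (w, x) ∈ A → 1 ≤ ({w' | (w', x) ∈ A} : Set V).ncard := by
    intro x w hw
    rw [Nat.one_le_iff_ne_zero]
    intro h0
    rw [Set.ncard_eq_zero (Set.toFinite _)] at h0
    exact absurd (h0 ▸ hw : w ∈ (∅ : Set V)) (Set.notMem_empty w)
  -- out-arc from a vertex of Q
  have hout : ∀ u ∈ Q.verts, ∃ w, H.Adj u w ∧ ¬ Q.Adj u w := by
    intro u hu
    have h1 := (hdeg1 u hu).1
    obtain ⟨w, hw⟩ := Set.ncard_eq_one.mp h1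
    have hmem : w ∈ ({w' | (u, w') ∈ A} : Set V) := by rw [hw]; exact rfl
    obtain ⟨v', hv', ha⟩ := hmem
    exact ⟨w, (harc v' hv' (u, w) ha).1, (harc v' hv' (u, w) ha).2⟩
  -- a leaf is never in Q.verts
  have hleaf_not_in : ∀ u, IsLeaf H u → u ∉ Q.verts := by
    intro u hLu huQ
    obtain ⟨u', hu'⟩ := hiso u huQ
    obtain ⟨w, hw1, hw2⟩ := hout u huQ
    exact two_nbrs_not_leaf' H (Q.adj_sub hu') hw1 (fun h => hw2 (h ▸ hu')) hLu
  intro v hv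
  refine ⟨fun h => hleaf_not_in v h hv, ?_⟩
  rintro ⟨u, hadj, hLu⟩
  have huNQ : u ∉ Q.verts := hleaf_not_in u hLu
  have hQadj : ¬ Q.Adj v u := fun h => huNQ h.snd_mem
  obtain ⟨v', hv', hor⟩ := hcover v u hadj hv hQadj
  have hne : u ≠ v' := fun h => huNQ (h ▸ hv')
  obtain ⟨hhead, hnodup, hlen⟩ := hpath v' hv'
  have hLu1 : (H.neighborSet u).ncard = 1 := hLu
  rcases hor with hvu | huv
  · -- arc (v, u): u has positive indegree yet limited by d_H(u)=1
    have hvuA : (v, u) ∈ A := ⟨v', hv', hvu⟩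
    have hpos := hindpos u v hvuA
    have hum : u ∈ p v' := List.mem_of_mem_tail (List.of_mem_zip hvu).2
    by_cases hlast : (p v').getLast? = some u
    · have := hdeg3 v' hv' u hlast
      beta_reduce at this
      rw [hLu1] at this
      omega
    · have := (hdeg2 v' hv' u hum hne hlast).2
      beta_reduce at this
      rw [hLu1] at this
      omega
  · -- arc (u, v): u is an inner vertex with indegree 0, yet has a predecessor
    have hum : u ∈ p v' := (List.of_mem_zip huv).1
    have hlast : (p v').getLast? ≠ some u := not_getLast_of_arc' hnodup huv
    have hind0 := (hdeg2 v' hv' u hum hne hlast).2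
    beta_reduce at hind0
    rw [hLu1] at hind0
    have hutail : u ∈ (p v').tail := by
      cases hl : p v' with
      | nil => rw [hl] at hhead; simp at hhead
      | cons a t =>
        rw [hl] at hhead hum
        simp at hhead
        subst hhead
        rcases List.mem_cons.mp hum with rfl | h
        · exact absurd rfl hne
        · exact h
    obtain ⟨x, hx⟩ := exists_pred_arc' hutail
    have := hindpos u x ⟨v', hv', hx⟩
    omega
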